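/- For every ℓ ∈ [0,1], there exist points x, y in the middle-thirds Cantor set C with y − x = ℓ; i.e., the difference set C − C equals [−1,1]. -/

import Mathlib

open Finset in
/-- Summability of digit-type series. -/
lemma summable_digits {c : ℕ → ℝ} (h0 : ∀ n, 0 ≤ c n) (h2 : ∀ n, c n ≤ 2) :
    Summable (fun n => c n / 3 ^ (n + 1)) := by
  have hg : Summable (fun n : ℕ => (2 : ℝ) * (1 / 3) ^ n) :=
    (summable_geometric_of_lt_one (by norm_num) (by norm_num)).mul_left 2
  refine Summable.of_nonneg_of_le (fun n => div_nonneg (h0 n) (by positivity)) (fun n => ?_) hg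
  have e : (2:ℝ) * (1/3) ^ n = 2 / 3 ^ n := by rw [div_pow, one_pow]; ring
  rw [e]
  have h1 : c n / 3 ^ (n + 1) ≤ 2 / 3 ^ (n + 1) := by
    gcongr
    exact h2 n
  refine h1.trans ?_
  gcongr
  · norm_num
  · exact Nat.le_succ n

lemma tsum_two_thirds : HasSum (fun n : ℕ => (2 : ℝ) / 3 ^ (n + 1)) 1 := by
  have h := hasSum_geometric_of_lt_one (show (0:ℝ) ≤ 1/3 by norm_num) (by norm_num)
  have h2 := h.mul_left (2/3 : ℝ)
  have : (2/3 : ℝ) * (1 - 1/3)⁻¹ = 1 := by norm_num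
  rw [this] at h2
  convert h2 using 2 with n
  · rfl
  rw [div_pow, one_pow]
  field_simp
  ring

/-- Sums of series with digits in {0,2} lie in each pre-Cantor set. -/
lemma digit_sum_mem_preCantorSet (N : ℕ) :
    ∀ a : ℕ → ℝ, (∀ n, a n = 0 ∨ a n = 1) →
      (∑' n, 2 * a n / 3 ^ (n + 1)) ∈ preCantorSet N := by
  induction N with
  | zero =>
    intro a ha
    have h0 : ∀ n, (0:ℝ) ≤ 2 * a n := by
      intro n; rcases ha n with h | h <;> rw [h] <;> norm_num
    have h2 : ∀ n, 2 * a n ≤ 2 := by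
      intro n; rcases ha n with h | h <;> rw [h] <;> norm_num
    have hs : Summable (fun n => 2 * a n / 3 ^ (n + 1)) := summable_digits h0 h2
    constructor
    · exact tsum_nonneg fun n => div_nonneg (h0 n) (by positivity)
    · calc ∑' n, 2 * a n / 3 ^ (n + 1) ≤ ∑' n : ℕ, (2:ℝ) / 3 ^ (n + 1) := by
            refine Summable.tsum_le_tsum (fun n => ?_) hs tsum_two_thirds.summable
            exact div_le_div_of_nonneg_right (h2 n) (by positivity)
        _ = 1 := tsum_two_thirds.tsum_eq
  | succ N ih =>
    intro a ha
    have h0 : ∀ n, (0:ℝ) ≤ 2 * a n := by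
      intro n; rcases ha n with h | h <;> rw [h] <;> norm_num
    have h2 : ∀ n, 2 * a n ≤ 2 := by
      intro n; rcases ha n with h | h <;> rw [h] <;> norm_num
    have hs : Summable (fun n => 2 * a n / 3 ^ (n + 1)) := summable_digits h0 h2
    have hs' : Summable (fun n => 2 * a (n + 1) / 3 ^ (n + 1)) :=
      summable_digits (fun n => h0 (n + 1)) (fun n => h2 (n + 1))
    have key : ∑' n, 2 * a n / 3 ^ (n + 1)
        = (2 * a 0 + ∑' n, 2 * a (n + 1) / 3 ^ (n + 1)) / 3 := by
      rw [Summable.tsum_eq_zero_add hs]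
      have e1 : ∀ n : ℕ, 2 * a (n + 1) / 3 ^ (n + 1 + 1)
          = (2 * a (n + 1) / 3 ^ (n + 1)) / 3 := by
        intro n; rw [pow_succ]; ring
      rw [tsum_congr e1, tsum_div_const]
      ring
    have htail := ih (fun n => a (n + 1)) (fun n => ha (n + 1))
    rcases ha 0 with h | h
    · left
      exact ⟨∑' n, 2 * a (n + 1) / 3 ^ (n + 1), htail, by rw [key, h]; ring⟩
    · right
      exact ⟨∑' n, 2 * a (n + 1) / 3 ^ (n + 1), htail, by rw [key, h]; ring⟩

lemma digit_sum_mem_cantorSet {a : ℕ → ℝ} (ha : ∀ n, a n = 0 ∨ a n = 1) :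
    (∑' n, 2 * a n / 3 ^ (n + 1)) ∈ cantorSet :=
  Set.mem_iInter.mpr fun N => digit_sum_mem_preCantorSet N a ha

/-- The Cantor set is symmetric about 1/2. -/
lemma one_sub_mem_cantorSet {x : ℝ} (hx : x ∈ cantorSet) : 1 - x ∈ cantorSet := by
  have : ∀ N : ℕ, ∀ y ∈ preCantorSet N, 1 - y ∈ preCantorSet N := by
    intro N
    induction N with
    | zero => intro y hy; exact ⟨by linarith [hy.2], by linarith [hy.1]⟩
    | succ N ih =>
      rintro y (⟨u, hu, rfl⟩ | ⟨u, hu, rfl⟩)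
      · exact Or.inr ⟨1 - u, ih u hu, by ring⟩
      · exact Or.inl ⟨1 - u, ih u hu, by ring⟩
  exact Set.mem_iInter.mpr fun N => this N x (Set.mem_iInter.mp hx N)

lemma one_mem_cantorSet : (1:ℝ) ∈ cantorSet := by
  have := one_sub_mem_cantorSet zero_mem_cantorSet
  simpa using this

open Finset in
/-- Ternary digit expansion for t ∈ [0,1). -/
lemma exists_ternary_digits {t : ℝ} (ht0 : 0 ≤ t) (ht1 : t < 1) :
    ∃ d : ℕ → ℤ, (∀ n, 0 ≤ d n ∧ d n ≤ 2) ∧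
      HasSum (fun n => (d n : ℝ) / 3 ^ (n + 1)) t := by
  set d : ℕ → ℤ := fun n => ⌊t * 3 ^ (n + 1)⌋ - 3 * ⌊t * 3 ^ n⌋ with hd
  have hbound : ∀ n, 0 ≤ d n ∧ d n ≤ 2 := by
    intro n
    have e : t * 3 ^ (n + 1) = 3 * (t * 3 ^ n) := by rw [pow_succ]; ring
    have hA : (3 : ℤ) * ⌊t * 3 ^ n⌋ ≤ ⌊t * 3 ^ (n + 1)⌋ := by
      rw [e, Int.le_floor]; push_cast
      linarith [Int.floor_le (t * 3 ^ n)]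
    have hB : ⌊t * 3 ^ (n + 1)⌋ < 3 * ⌊t * 3 ^ n⌋ + 3 := by
      rw [e, Int.floor_lt]; push_cast
      linarith [Int.lt_floor_add_one (t * 3 ^ n)]
    simp only [hd]
    omega
  refine ⟨d, hbound, ?_⟩
  have h0 : ∀ n, (0:ℝ) ≤ (d n : ℝ) / 3 ^ (n + 1) := by
    intro n
    have := (hbound n).1
    positivity
  rw [hasSum_iff_tendsto_nat_of_nonneg h0]
  -- partial sums telescope
  have hpartial : ∀ n : ℕ, ∑ k ∈ range n, (d k : ℝ) / 3 ^ (k + 1)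
      = (⌊t * 3 ^ n⌋ : ℝ) / 3 ^ n := by
    intro n
    have tele := Finset.sum_range_sub (fun k => (⌊t * 3 ^ k⌋ : ℝ) / 3 ^ k) n
    have hterm : ∀ k ∈ range n, (d k : ℝ) / 3 ^ (k + 1)
        = (fun j => (⌊t * 3 ^ j⌋ : ℝ) / 3 ^ j) (k + 1)
          - (fun j => (⌊t * 3 ^ j⌋ : ℝ) / 3 ^ j) k := by
      intro k _
      simp only [hd]
      have h3 : (3:ℝ) ^ (k + 1) = 3 ^ k * 3 := by rw [pow_succ]
      push_cast
      field_simp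
      ring
    rw [Finset.sum_congr rfl hterm, tele]
    have hf0 : ⌊t * 3 ^ (0:ℕ)⌋ = 0 := by
      simp only [pow_zero, mul_one]
      exact Int.floor_eq_zero_iff.mpr ⟨ht0, ht1⟩
    rw [hf0]
    simp
  simp only [hpartial]
  -- convergence of floor approximations
  have hsq : ∀ n : ℕ, |(⌊t * 3 ^ n⌋ : ℝ) / 3 ^ n - t| ≤ (1/3) ^ n := by
    intro n
    have h3 : (0:ℝ) < 3 ^ n := by positivity
    have e : ((1:ℝ)/3) ^ n = 1 / 3 ^ n := by rw [div_pow, one_pow]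
    have hinv : (1 / (3:ℝ) ^ n) * 3 ^ n = 1 := by field_simp
    have hA : (⌊t * 3 ^ n⌋ : ℝ) / 3 ^ n ≤ t := by
      rw [div_le_iff₀ h3]; exact Int.floor_le (t * 3 ^ n)
    have hB : t - 1 / 3 ^ n ≤ (⌊t * 3 ^ n⌋ : ℝ) / 3 ^ n := by
      rw [le_div_iff₀ h3]
      nlinarith [Int.lt_floor_add_one (t * 3 ^ n)]
    rw [abs_le, e]
    constructor <;> linarith
  have htend : Filter.Tendsto (fun n : ℕ => (⌊t * 3 ^ n⌋ : ℝ) / 3 ^ n)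
      Filter.atTop (nhds t) := by
    have hg : Filter.Tendsto (fun n : ℕ => ((1:ℝ)/3) ^ n) Filter.atTop (nhds 0) :=
      tendsto_pow_atTop_nhds_zero_of_lt_one (by norm_num) (by norm_num)
    have : Filter.Tendsto (fun n : ℕ => (⌊t * 3 ^ n⌋ : ℝ) / 3 ^ n - t)
        Filter.atTop (nhds 0) := by
      apply squeeze_zero_norm (fun n => hsq n) hg
    have := this.add_const t
    simpa using this
  exact htend

/-- Main existence lemma: every ℓ ∈ [0,1] is a difference of Cantor set points. -/
lemma cantor_diff {ℓ : ℝ} (h0 : 0 ≤ ℓ) (h1 : ℓ ≤ 1) :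
    ∃ x ∈ cantorSet, ∃ y ∈ cantorSet, y - x = ℓ := by
  rcases eq_or_lt_of_le h1 with rfl | h1
  · exact ⟨0, zero_mem_cantorSet, 1, one_mem_cantorSet, by norm_num⟩
  · set t : ℝ := (1 + ℓ) / 2 with htdef
    have ht0 : 0 ≤ t := by rw [htdef]; linarith
    have ht1 : t < 1 := by rw [htdef]; linarith
    obtain ⟨d, hdb, hsum⟩ := exists_ternary_digits ht0 ht1
    set a : ℕ → ℝ := fun n => min (d n : ℝ) 1 with ha
    set b : ℕ → ℝ := fun n => (d n : ℝ) - a n with hb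
    have hd01 : ∀ n, d n = 0 ∨ d n = 1 ∨ d n = 2 := by
      intro n; have := hdb n; omega
    have ha01 : ∀ n, a n = 0 ∨ a n = 1 := by
      intro n; rcases hd01 n with h | h | h <;>
        simp [ha, h] <;> norm_num
    have hb01 : ∀ n, b n = 0 ∨ b n = 1 := by
      intro n; rcases hd01 n with h | h | h <;>
        simp [hb, ha, h] <;> norm_num
    have hab : ∀ n, a n + b n = (d n : ℝ) := by intro n; rw [hb]; ring
    have hbounds : ∀ c : ℕ → ℝ, (∀ n, c n = 0 ∨ c n = 1) →
        (∀ n, (0:ℝ) ≤ 2 * c n) ∧ (∀ n, 2 * c n ≤ 2) := by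
      intro c hc
      constructor <;> intro n <;> rcases hc n with h | h <;> rw [h] <;> norm_num
    have hsa : Summable (fun n => 2 * a n / 3 ^ (n + 1)) :=
      summable_digits (hbounds a ha01).1 (hbounds a ha01).2
    have hsb : Summable (fun n => 2 * b n / 3 ^ (n + 1)) :=
      summable_digits (hbounds b hb01).1 (hbounds b hb01).2
    set x : ℝ := ∑' n, 2 * a n / 3 ^ (n + 1) with hxdef
    set y : ℝ := ∑' n, 2 * b n / 3 ^ (n + 1) with hydef
    have hxmem : x ∈ cantorSet := digit_sum_mem_cantorSet ha01
    have hymem : y ∈ cantorSet := digit_sum_mem_cantorSet hb01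
    have hadd : HasSum (fun n => 2 * a n / 3 ^ (n + 1) + 2 * b n / 3 ^ (n + 1)) (x + y) :=
      hsa.hasSum.add hsb.hasSum
    have hcongr : (fun n => 2 * a n / 3 ^ (n + 1) + 2 * b n / 3 ^ (n + 1))
        = fun n => 2 * ((d n : ℝ) / 3 ^ (n + 1)) := by
      funext n
      rw [← hab n]
      ring
    rw [hcongr] at hadd
    have h2t : HasSum (fun n => 2 * ((d n : ℝ) / 3 ^ (n + 1))) (2 * t) := hsum.mul_left 2
    have hxy : x + y = 2 * t := hadd.unique h2t
    have hxyl : x + y = 1 + ℓ := by rw [hxy, htdef]; ring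
    exact ⟨1 - x, one_sub_mem_cantorSet hxmem, y, hymem, by linarith⟩

theorem stmt17 :
    (∀ ℓ ∈ Set.Icc (0:ℝ) 1, ∃ x ∈ cantorSet, ∃ y ∈ cantorSet, y - x = ℓ) ∧
    {d : ℝ | ∃ x ∈ cantorSet, ∃ y ∈ cantorSet, x - y = d} = Set.Icc (-1) 1 := by
  constructor
  · intro ℓ hℓ
    exact cantor_diff hℓ.1 hℓ.2
  · ext d
    simp only [Set.mem_setOf_eq, Set.mem_Icc]
    constructor
    · rintro ⟨x, hx, y, hy, rfl⟩
      have hx' := cantorSet_subset_unitInterval hx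
      have hy' := cantorSet_subset_unitInterval hy
      exact ⟨by linarith [hx'.1, hy'.2], by linarith [hx'.2, hy'.1]⟩
    · rintro ⟨hd1, hd2⟩
      rcases le_total 0 d with h | h
      · obtain ⟨x, hx, y, hy, hxy⟩ := cantor_diff h hd2
        exact ⟨y, hy, x, hx, hxy⟩
      · obtain ⟨x, hx, y, hy, hxy⟩ := cantor_diff (by linarith : (0:ℝ) ≤ -d) (by linarith)
        exact ⟨x, hx, y, hy, by linarith⟩
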